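/- The exact sequence 0 → Z·x → P → Pic → 0 of W(A4)-modules (x = e_1+e_2+e_3+e_4+e_5+2e) splits: the W(A4)-linear map P → Z sending e to -2 and each e_i to 1 restricts to the identity on Z·x (identifying Z·x with Z via x ↦ 1). Consequently Pic is a direct summand of the permutation module P, i.e., Pic is an invertible W(A4)-module. -/
import Mathlib


open Finset

/-!  Coordinates `(a, b₁, b₂, b₃, b₄)` on `Pic = ℤ⁵` correspond to
`aℓ₀ - b₁ℓ₁ - b₂ℓ₂ - b₃ℓ₃ - b₄ℓ₄`.  -/

/-- The action of the simple reflections `σ₁, σ₂, σ₃, σ₄` of `W(A₄)` on `Pic`. -/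
def sigmaPic (i : Fin 4) (v : Fin 5 → ℤ) : Fin 5 → ℤ :=
  if h : i.val < 3 then
    v ∘ Equiv.swap (⟨i.val + 1, by omega⟩ : Fin 5) ⟨i.val + 2, by omega⟩
  else
    ![2 * v 0 - v 1 - v 2 - v 3, v 0 - v 2 - v 3, v 0 - v 1 - v 3, v 0 - v 1 - v 2, v 4]

/-- The permutation action of `σᵢ` on `P = ℤ·e ⊕ ⊕ⱼ₌₁⁵ ℤ·eⱼ` (coordinate `0` is `e`):
`σᵢ` swaps `eᵢ` and `eᵢ₊₁` and fixes the rest. -/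
def sigmaP (i : Fin 4) (q : Fin 6 → ℤ) : Fin 6 → ℤ :=
  q ∘ Equiv.swap (⟨i.val + 1, by omega⟩ : Fin 6) ⟨i.val + 2, by omega⟩

/-- `h₁, …, h₄ = ℓ₀ - ℓᵢ` and `h₅ = 2ℓ₀ - ℓ₁ - ℓ₂ - ℓ₃ - ℓ₄`. -/
def hElt : Fin 5 → (Fin 5 → ℤ) :=
  ![![1, 1, 0, 0, 0], ![1, 0, 1, 0, 0], ![1, 0, 0, 1, 0], ![1, 0, 0, 0, 1],
    ![2, 1, 1, 1, 1]]

/-- `ω = -3ℓ₀ + ℓ₁ + ℓ₂ + ℓ₃ + ℓ₄`. -/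
def omegaS : Fin 5 → ℤ := ![-3, -1, -1, -1, -1]

/-- The map `f : P → Pic`, `e ↦ ω`, `eᵢ ↦ hᵢ`. -/
def fMap (q : Fin 6 → ℤ) : Fin 5 → ℤ :=
  q 0 • omegaS + ∑ i : Fin 5, q i.succ • hElt i

/-- `x = e₁ + e₂ + e₃ + e₄ + e₅ + 2e`. -/
def xElt : Fin 6 → ℤ := ![2, 1, 1, 1, 1, 1]

/-- The retraction `P → ℤ`, `e ↦ -2`, `eᵢ ↦ 1`. -/
def sMap (q : Fin 6 → ℤ) : ℤ := -2 * q 0 + q 1 + q 2 + q 3 + q 4 + q 5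


/-- Explicit equivariant section of `fMap` with image in `ker sMap`. -/
def gSec (v : Fin 5 → ℤ) (j : Fin 6) : ℤ :=
  if j.val = 0 then -3 * v 0 + v 1 + v 2 + v 3 + v 4
  else if j.val = 1 then -v 0 + v 1
  else if j.val = 2 then -v 0 + v 2
  else if j.val = 3 then -v 0 + v 3
  else if j.val = 4 then -v 0 + v 4
  else -2 * v 0 + v 1 + v 2 + v 3 + v 4

/-- the exact sequence `0 → ℤ·x → P → Pic → 0` of `W(A₄)`-modules
splits: the `W(A₄)`-invariant functional `s : P → ℤ` (`e ↦ -2`, `eᵢ ↦ 1`) sends `x`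
to `1`; consequently `Pic` is a direct summand of the permutation module `P`, i.e.
an invertible `W(A₄)`-module. -/
theorem delPezzo5_sequence_splits :
    sMap xElt = 1 ∧
    (∀ q q' : Fin 6 → ℤ, sMap (q + q') = sMap q + sMap q') ∧
    (∀ (i : Fin 4) (q : Fin 6 → ℤ), sMap (sigmaP i q) = sMap q) ∧
    (∃ g : (Fin 5 → ℤ) → (Fin 6 → ℤ),
      (∀ v v' : Fin 5 → ℤ, g (v + v') = g v + g v') ∧
      (∀ v : Fin 5 → ℤ, fMap (g v) = v) ∧
      (∀ (i : Fin 4) (v : Fin 5 → ℤ), g (sigmaPic i v) = sigmaP i (g v))) := by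
  refine ⟨by decide, ?_, ?_, gSec, ?_, ?_, ?_⟩
  · intro q q'
    simp only [sMap, Pi.add_apply]
    ring
  · intro i q
    fin_cases i <;>
      simp +decide [sMap, sigmaP, Equiv.swap_apply_def, Fin.ext_iff] <;> ring
  · intro v v'
    funext j
    fin_cases j <;> simp +decide [gSec, Pi.add_apply] <;> ring
  · intro v
    funext j
    fin_cases j <;>
      simp +decide [fMap, gSec, Fin.sum_univ_five, omegaS, hElt, Fin.isValue] <;>
      ring
  · intro i v
    fin_cases i <;> funext j <;> fin_cases j <;>
      simp +decide [gSec, sigmaPic, sigmaP, Equiv.swap_apply_def, Fin.ext_iff] <;>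
      ring
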